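/- For each canonical interval [b,e] with respect to column j-1 (rows whose haplotypes are all equal), the image {fore[t][j-1] : b ≤ t ≤ e} is an interval of consecutive integers, and it is contained in a single canonical interval with respect to column j; consequently ℓ_j ≤ ℓ_{j-1}. -/

import Mathlib

namespace PBWT

/-- The reversed prefix of length `j` (truncated at `w`) of haplotype `i`:
used to express the co-lexicographic order of prefixes. -/
def revPrefix {h w : ℕ} (S : Fin h → Fin w → ℕ) (j : ℕ) (i : Fin h) : List ℕ :=
  ((List.range j).filterMap (fun t => if ht : t < w then some (S i ⟨t, ht⟩) else none)).reverse

/-- `PA` is the stable sort of the haplotype indices by the co-lexicographic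
order of their prefixes of length `j` (ties broken by original index). -/
def IsStableSort {h w : ℕ} (S : Fin h → Fin w → ℕ) (j : ℕ) (PA : Fin h ≃ Fin h) : Prop :=
  ∀ a b : Fin h, a < b →
    List.Lex (· < ·) (revPrefix S j (PA a)) (revPrefix S j (PA b)) ∨
      (revPrefix S j (PA a) = revPrefix S j (PA b) ∧ (PA a).val < (PA b).val)

/-- Number of maximal runs of equal adjacent values in the sequence `f`. -/
def runCount {α : Type*} [DecidableEq α] {n : ℕ} (f : Fin n → α) : ℕ :=
  ((List.ofFn f).destutter (· ≠ ·)).length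

/-- `h''`: the number of indices `i` with `S i ≠ S (i+1)`. -/
noncomputable def adjDiff {h w : ℕ} (S : Fin h → Fin w → ℕ) : ℕ :=
  Nat.card {i : Fin h // ∃ h1 : (i : ℕ) + 1 < h, S i ≠ S ⟨(i : ℕ) + 1, h1⟩}

/-! ### Key order -/

def ordK {h : ℕ} (rp : Fin h → List ℕ) (x y : Fin h) : Prop :=
  List.Lex (· < ·) (rp x) (rp y) ∨ (rp x = rp y ∧ x.val < y.val)

lemma lex_asymm {l m : List ℕ} (h1 : List.Lex (· < ·) l m) (h2 : List.Lex (· < ·) m l) :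
    False :=
  (List.Lex.asymm (α := ℕ) (· < ·)).asymm l m h1 h2

lemma lex_irrefl (l : List ℕ) : ¬ List.Lex (· < ·) l l := fun hl => lex_asymm hl hl

lemma ordK_irrefl {h : ℕ} (rp : Fin h → List ℕ) (x : Fin h) : ¬ ordK rp x x := by
  rintro (hl | ⟨_, hlt⟩)
  · exact lex_irrefl _ hl
  · omega

lemma ordK_asymm {h : ℕ} (rp : Fin h → List ℕ) (x y : Fin h) :
    ordK rp x y → ordK rp y x → False := by
  rintro (h1 | ⟨e1, l1⟩) (h2 | ⟨e2, l2⟩)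
  · exact lex_asymm h1 h2
  · rw [e2] at h1; exact lex_irrefl _ h1
  · rw [e1] at h2; exact lex_irrefl _ h2
  · omega

lemma symm_lt_iff {h : ℕ} (rp : Fin h → List ℕ) (PA : Fin h ≃ Fin h)
    (hPA : ∀ a b : Fin h, a < b → ordK rp (PA a) (PA b)) (x y : Fin h) :
    PA.symm x < PA.symm y ↔ ordK rp x y := by
  constructor
  · intro hlt
    have := hPA _ _ hlt
    rwa [Equiv.apply_symm_apply, Equiv.apply_symm_apply] at this
  · intro ho
    rcases lt_trichotomy (PA.symm x) (PA.symm y) with h1 | h1 | h1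
    · exact h1
    · exfalso
      have hxy : x = y := by
        have := congrArg PA h1
        rwa [Equiv.apply_symm_apply, Equiv.apply_symm_apply] at this
      subst hxy; exact ordK_irrefl rp x ho
    · exfalso
      have := hPA _ _ h1
      rw [Equiv.apply_symm_apply, Equiv.apply_symm_apply] at this
      exact ordK_asymm rp x y ho this

lemma revPrefix_congr {h w : ℕ} (S : Fin h → Fin w → ℕ) (j : ℕ) {x y : Fin h}
    (hxy : S x = S y) : revPrefix S j x = revPrefix S j y := by
  unfold revPrefix
  rw [hxy]

lemma revPrefix_succ {h w : ℕ} (S : Fin h → Fin w → ℕ) {j : ℕ} (hj : j < w) (i : Fin h) :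
    revPrefix S (j+1) i = S i ⟨j, hj⟩ :: revPrefix S j i := by
  unfold revPrefix
  rw [List.range_succ, List.filterMap_append, List.reverse_append]
  simp [hj]

/-! ### The successor step -/

lemma succ_step {h w : ℕ} (S : Fin h → Fin w → ℕ) {j : ℕ} (hj : j < w)
    (PA1 PA2 : Fin h ≃ Fin h)
    (hPA1 : IsStableSort S j PA1) (hPA2 : IsStableSort S (j + 1) PA2)
    (t t' : Fin h) (hS : S (PA1 t) = S (PA1 t')) (hsucc : t'.val = t.val + 1) :
    (PA2.symm (PA1 t')).val = (PA2.symm (PA1 t)).val + 1 := by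
  have hPA1' : ∀ a b : Fin h, a < b → ordK (revPrefix S j) (PA1 a) (PA1 b) := hPA1
  have hPA2' : ∀ a b : Fin h, a < b → ordK (revPrefix S (j+1)) (PA2 a) (PA2 b) := hPA2
  have iff1 := symm_lt_iff _ PA1 hPA1'
  have iff2 := symm_lt_iff _ PA2 hPA2'
  have rp1eq : revPrefix S j (PA1 t) = revPrefix S j (PA1 t') := revPrefix_congr S j hS
  have rp2eq : revPrefix S (j+1) (PA1 t) = revPrefix S (j+1) (PA1 t') :=
    revPrefix_congr S (j+1) hS
  have htt' : t < t' := by rw [Fin.lt_def]; omega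
  have hidx : (PA1 t).val < (PA1 t').val := by
    rcases hPA1 t t' htt' with hl | ⟨_, hi⟩
    · rw [rp1eq] at hl; exact absurd hl (lex_irrefl _)
    · exact hi
  have hac : PA2.symm (PA1 t) < PA2.symm (PA1 t') :=
    (iff2 _ _).mpr (Or.inr ⟨rp2eq, hidx⟩)
  rw [Fin.lt_def] at hac
  by_contra hne
  have hlt : (PA2.symm (PA1 t)).val + 1 < (PA2.symm (PA1 t')).val := by omega
  have hm : (PA2.symm (PA1 t)).val + 1 < h := lt_trans hlt (PA2.symm (PA1 t')).isLt
  set z : Fin h := PA2 ⟨(PA2.symm (PA1 t)).val + 1, hm⟩ with hz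
  have o1 : ordK (revPrefix S (j+1)) (PA1 t) z := by
    rw [← iff2, hz, Equiv.symm_apply_apply, Fin.lt_def]
    simp
  have o2 : ordK (revPrefix S (j+1)) z (PA1 t') := by
    rw [← iff2, hz, Equiv.symm_apply_apply, Fin.lt_def]
    exact hlt
  rcases o1 with hl1 | ⟨e1, i1⟩
  · rcases o2 with hl2 | ⟨e2, i2⟩
    · rw [rp2eq] at hl1
      exact lex_asymm hl1 hl2
    · rw [e2, ← rp2eq] at hl1
      exact absurd hl1 (lex_irrefl _)
  · rcases o2 with hl2 | ⟨e2, i2⟩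
    · rw [← e1, rp2eq] at hl2
      exact absurd hl2 (lex_irrefl _)
    · have rp1z : revPrefix S j (PA1 t) = revPrefix S j z := by
        have c1 := revPrefix_succ S hj (PA1 t)
        have c2 := revPrefix_succ S hj z
        rw [c1, c2] at e1
        exact (List.cons_eq_cons.mp e1).2
      have o1' : ordK (revPrefix S j) (PA1 t) z := Or.inr ⟨rp1z, i1⟩
      have o2' : ordK (revPrefix S j) z (PA1 t') := Or.inr ⟨by rw [← rp1z, rp1eq], i2⟩
      have k1 : PA1.symm (PA1 t) < PA1.symm z := (iff1 _ _).mpr o1'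
      have k2 : PA1.symm z < PA1.symm (PA1 t') := (iff1 _ _).mpr o2'
      rw [Equiv.symm_apply_apply] at k1 k2
      rw [Fin.lt_def] at k1 k2
      omega

/-! ### Consecutive images -/

lemma consec {h w : ℕ} (S : Fin h → Fin w → ℕ) {j : ℕ} (hj : j < w)
    (PA1 PA2 : Fin h ≃ Fin h)
    (hPA1 : IsStableSort S j PA1) (hPA2 : IsStableSort S (j + 1) PA2)
    (b e : Fin h) (hconst : ∀ t : Fin h, b ≤ t → t ≤ e → S (PA1 t) = S (PA1 b)) :
    ∀ t : Fin h, b ≤ t → t ≤ e →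
      (PA2.symm (PA1 t)).val = (PA2.symm (PA1 b)).val + (t.val - b.val) := by
  have main : ∀ d : ℕ, ∀ hd : b.val + d < h, b.val + d ≤ e.val →
      (PA2.symm (PA1 ⟨b.val + d, hd⟩)).val = (PA2.symm (PA1 b)).val + d := by
    intro d
    induction d with
    | zero =>
      intro hd _
      have hb : (⟨b.val + 0, hd⟩ : Fin h) = b := Fin.ext (by simp)
      rw [hb]
      omega
    | succ d ih =>
      intro hd hle
      have hd0 : b.val + d < h := by omega
      have hbt : b ≤ (⟨b.val + d, hd0⟩ : Fin h) := by rw [Fin.le_def]; simp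
      have hte : (⟨b.val + d, hd0⟩ : Fin h) ≤ e := by rw [Fin.le_def]; simp; omega
      have hbt' : b ≤ (⟨b.val + (d+1), hd⟩ : Fin h) := by rw [Fin.le_def]; simp
      have ht'e : (⟨b.val + (d+1), hd⟩ : Fin h) ≤ e := by rw [Fin.le_def]; exact hle
      have hS : S (PA1 ⟨b.val + d, hd0⟩) = S (PA1 ⟨b.val + (d+1), hd⟩) := by
        rw [hconst _ hbt hte, hconst _ hbt' ht'e]
      have hstep := succ_step S hj PA1 PA2 hPA1 hPA2 ⟨b.val + d, hd0⟩ ⟨b.val + (d+1), hd⟩ hS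
        (by simp [Nat.add_assoc])
      rw [hstep, ih hd0 (by omega)]
      omega
  intro t hbt hte
  have hble : b.val ≤ t.val := Fin.le_def.mp hbt
  have hteval : t.val ≤ e.val := Fin.le_def.mp hte
  have heq : (⟨b.val + (t.val - b.val), by omega⟩ : Fin h) = t := Fin.ext (by simp; omega)
  have hmm := main (t.val - b.val) (by omega) (by omega)
  rw [heq] at hmm
  exact hmm

lemma interval_const {h w : ℕ} (S : Fin h → Fin w → ℕ) {j : ℕ} (hj : j < w)
    (PA1 PA2 : Fin h ≃ Fin h)
    (hPA1 : IsStableSort S j PA1) (hPA2 : IsStableSort S (j + 1) PA2)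
    (b e : Fin h) (hbe : b ≤ e)
    (hconst : ∀ t : Fin h, b ≤ t → t ≤ e → S (PA1 t) = S (PA1 b)) :
    ∀ u : Fin h, (PA2.symm (PA1 b)).val ≤ u.val → u.val ≤ (PA2.symm (PA1 e)).val →
      S (PA2 u) = S (PA1 b) := by
  intro u h1 h2
  have he := consec S hj PA1 PA2 hPA1 hPA2 b e hconst e hbe le_rfl
  have hble : b.val ≤ e.val := Fin.le_def.mp hbe
  have ht0 : b.val + (u.val - (PA2.symm (PA1 b)).val) < h := by omega
  set t : Fin h := ⟨b.val + (u.val - (PA2.symm (PA1 b)).val), ht0⟩ with ht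
  have hbt : b ≤ t := by rw [Fin.le_def]; simp [ht]
  have hte : t ≤ e := by rw [Fin.le_def]; simp [ht]; omega
  have hct := consec S hj PA1 PA2 hPA1 hPA2 b e hconst t hbt hte
  have hu : PA2.symm (PA1 t) = u := by
    apply Fin.ext
    rw [hct]
    simp [ht]
    omega
  have hPAu : PA2 u = PA1 t := by rw [← hu, Equiv.apply_symm_apply]
  rw [hPAu, hconst t hbt hte]

/-! ### Run counting -/

lemma destutter'_length_cons {α : Type*} [DecidableEq α] (a bb : α) (l : List α) :
    (List.destutter' (· ≠ ·) a (bb :: l)).length =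
      (if a ≠ bb then 1 else 0) + (List.destutter' (· ≠ ·) bb l).length := by
  rw [List.destutter'_cons]
  split_ifs with hab
  · simp [Nat.add_comm]
  · push_neg at hab
    subst hab
    simp

lemma runCount_eq_sum {α : Type*} [DecidableEq α] :
    ∀ (m : ℕ) (f : Fin (m+1) → α),
      runCount f = 1 + ∑ i : Fin m, (if f i.castSucc ≠ f i.succ then 1 else 0) := by
  intro m
  induction m with
  | zero =>
    intro f
    simp [runCount, List.ofFn_succ, List.destutter]
  | succ m ih =>
    intro f
    have h1 : runCount f = (if f 0 ≠ f 1 then 1 else 0) +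
        runCount (fun i : Fin (m+1) => f i.succ) := by
      rw [runCount, runCount, List.ofFn_succ, List.ofFn_succ, List.destutter, List.destutter,
        destutter'_length_cons]
      norm_num
      split_ifs <;> simp_all
    rw [h1, ih (fun i : Fin (m+1) => f i.succ), Fin.sum_univ_succ]
    have hterm : ∀ i : Fin m,
        (if f i.succ.castSucc ≠ f i.succ.succ then (1:ℕ) else 0) =
        (if f i.castSucc.succ ≠ f i.succ.succ then (1:ℕ) else 0) := by
      intro i
      rw [Fin.succ_castSucc]
    have h0 : (0 : Fin (m+1)).castSucc = 0 := rfl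
    have h00 : (0 : Fin (m+1)).succ = 1 := rfl
    rw [Finset.sum_congr rfl (fun i _ => hterm i), h0, h00]
    omega

def isStart {α : Type*} {n : ℕ} (f : Fin n → α) (u : Fin n) : Prop :=
  u.val = 0 ∨ f ⟨u.val - 1, Nat.lt_of_le_of_lt (Nat.sub_le _ _) u.isLt⟩ ≠ f u

instance {α : Type*} [DecidableEq α] {n : ℕ} (f : Fin n → α) :
    DecidablePred (isStart f) := fun u => by unfold isStart; infer_instance

lemma runCount_eq_card {α : Type*} [DecidableEq α] (m : ℕ) (f : Fin (m+1) → α) :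
    runCount f = (Finset.univ.filter (isStart f)).card := by
  rw [runCount_eq_sum m f, Finset.card_filter, Fin.sum_univ_succ]
  have h0 : (if isStart f 0 then (1:ℕ) else 0) = 1 := if_pos (Or.inl rfl)
  rw [h0]
  congr 1
  apply Finset.sum_congr rfl
  intro i _
  have hiff : isStart f i.succ ↔ f i.castSucc ≠ f i.succ := by
    have hcast : (⟨i.succ.val - 1, Nat.lt_of_le_of_lt (Nat.sub_le _ _) i.succ.isLt⟩ :
        Fin (m+1)) = i.castSucc := by
      apply Fin.ext
      simp
    constructor
    · rintro (h' | hne)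
      · simp [Fin.val_succ] at h'
      · rwa [hcast] at hne
    · intro hne
      refine Or.inr ?_
      rwa [hcast]
  rw [if_congr hiff rfl rfl]

theorem stmt14 (h w : ℕ) (S : Fin h → Fin w → ℕ) (j : ℕ) (hj : j < w)
    (PA1 PA2 : Fin h ≃ Fin h)
    (hPA1 : IsStableSort S j PA1) (hPA2 : IsStableSort S (j + 1) PA2)
    (b e : Fin h) (hbe : b ≤ e)
    (hconst : ∀ t : Fin h, b ≤ t → t ≤ e → S (PA1 t) = S (PA1 b)) :
    (∀ t : Fin h, b ≤ t → t ≤ e →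
        (PA2.symm (PA1 t)).val = (PA2.symm (PA1 b)).val + ((t : ℕ) - (b : ℕ))) ∧
    (∀ u : Fin h, (PA2.symm (PA1 b)).val ≤ u.val → u.val ≤ (PA2.symm (PA1 e)).val →
        S (PA2 u) = S (PA1 b)) ∧
    runCount (fun i : Fin h => S (PA2 i)) ≤ runCount (fun i : Fin h => S (PA1 i)) := by
  classical
  refine ⟨consec S hj PA1 PA2 hPA1 hPA2 b e hconst,
          interval_const S hj PA1 PA2 hPA1 hPA2 b e hbe hconst, ?_⟩
  obtain ⟨m, rfl⟩ : ∃ m, h = m + 1 := ⟨h - 1, by have := b.pos; omega⟩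
  -- the "run beginning" function
  have hQex : ∀ t : Fin (m+1), ∃ mm, mm ≤ t.val ∧
      ∀ k (hk : k < m+1), mm ≤ k → k ≤ t.val → S (PA1 ⟨k, hk⟩) = S (PA1 t) := by
    intro t
    exact ⟨t.val, le_rfl, fun k hk h1 h2 =>
      congrArg (fun x => S (PA1 x)) (Fin.ext (le_antisymm h2 h1))⟩
  set rb : Fin (m+1) → ℕ := fun t => Nat.find (hQex t) with hrbdef
  have rb_spec : ∀ t, rb t ≤ t.val ∧
      ∀ k (hk : k < m+1), rb t ≤ k → k ≤ t.val → S (PA1 ⟨k, hk⟩) = S (PA1 t) :=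
    fun t => Nat.find_spec (hQex t)
  have rb_min : ∀ t mm, mm < rb t → ¬(mm ≤ t.val ∧
      ∀ k (hk : k < m+1), mm ≤ k → k ≤ t.val → S (PA1 ⟨k, hk⟩) = S (PA1 t)) :=
    fun t mm hmm => Nat.find_min (hQex t) hmm
  have rb_lt : ∀ t, rb t < m + 1 := fun t => lt_of_le_of_lt (rb_spec t).1 t.isLt
  have rb_start : ∀ t, isStart (fun i : Fin (m+1) => S (PA1 i)) ⟨rb t, rb_lt t⟩ := by
    intro t
    by_cases h0 : rb t = 0
    · exact Or.inl h0
    · refine Or.inr ?_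
      intro heq
      have hle := (rb_spec t).1
      refine rb_min t (rb t - 1) (by omega) ⟨by omega, ?_⟩
      intro k hk h1 h2
      rcases Nat.lt_or_ge k (rb t) with hklt | hge
      · have hkeq : k = rb t - 1 := by omega
        subst hkeq
        have h3 : S (PA1 ⟨rb t, rb_lt t⟩) = S (PA1 t) :=
          (rb_spec t).2 (rb t) (rb_lt t) le_rfl (rb_spec t).1
        exact heq.trans h3
      · exact (rb_spec t).2 k hk hge h2
  -- key injectivity argument
  have key : ∀ u u' : Fin (m+1), isStart (fun i : Fin (m+1) => S (PA2 i)) u' →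
      rb (PA1.symm (PA2 u)) = rb (PA1.symm (PA2 u')) → u.val < u'.val → False := by
    intro u u' hs' hrb hult
    set t : Fin (m+1) := PA1.symm (PA2 u) with htdef
    set t' : Fin (m+1) := PA1.symm (PA2 u') with ht'def
    have hmt : rb t ≤ t.val := (rb_spec t).1
    have hmt' : rb t ≤ t'.val := by rw [hrb]; exact (rb_spec t').1
    obtain ⟨M, hM1, hM2, hM3, hM4⟩ : ∃ M, t.val ≤ M ∧ t'.val ≤ M ∧ M < m + 1 ∧
        (M = t.val ∨ M = t'.val) := by
      rcases Nat.le_total t.val t'.val with hc | hc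
      · exact ⟨t'.val, hc, le_rfl, t'.isLt, Or.inr rfl⟩
      · exact ⟨t.val, le_rfl, hc, t.isLt, Or.inl rfl⟩
    set bb : Fin (m+1) := ⟨rb t, rb_lt t⟩ with hbb
    set ee : Fin (m+1) := ⟨M, hM3⟩ with hee
    have hbbv : bb.val = rb t := rfl
    have heev : ee.val = M := rfl
    have hbe' : bb ≤ ee := by rw [Fin.le_def, hbbv, heev]; omega
    have hconst' : ∀ s : Fin (m+1), bb ≤ s → s ≤ ee → S (PA1 s) = S (PA1 bb) := by
      intro s hbs hse
      rw [Fin.le_def, hbbv] at hbs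
      rw [Fin.le_def, heev] at hse
      have hbbt : S (PA1 bb) = S (PA1 t) :=
        (rb_spec t).2 (rb t) (rb_lt t) le_rfl hmt
      rcases le_or_gt s.val t.val with hst | hst
      · have h4 : S (PA1 ⟨s.val, s.isLt⟩) = S (PA1 t) :=
          (rb_spec t).2 s.val s.isLt hbs hst
        rw [Fin.eta] at h4
        rw [h4, hbbt]
      · have hst' : s.val ≤ t'.val := by omega
        have h4 : S (PA1 ⟨s.val, s.isLt⟩) = S (PA1 t') :=
          (rb_spec t').2 s.val s.isLt (hrb ▸ hbs) hst'
        have hbbt' : S (PA1 bb) = S (PA1 t') :=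
          (rb_spec t').2 (rb t) (rb_lt t) hrb.ge hmt'
        rw [Fin.eta] at h4
        rw [h4, hbbt']
    have himg := consec S hj PA1 PA2 hPA1 hPA2 bb ee hconst'
    have hu : u.val = (PA2.symm (PA1 bb)).val + (t.val - rb t) := by
      have h5 := himg t (by rw [Fin.le_def, hbbv]; exact hmt)
        (by rw [Fin.le_def, heev]; omega)
      rw [htdef, Equiv.apply_symm_apply, Equiv.symm_apply_apply] at h5
      rw [h5, hbbv]
    have hu' : u'.val = (PA2.symm (PA1 bb)).val + (t'.val - rb t) := by
      have h5 := himg t' (by rw [Fin.le_def, hbbv]; exact hmt')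
        (by rw [Fin.le_def, heev]; omega)
      rw [ht'def, Equiv.apply_symm_apply, Equiv.symm_apply_apply] at h5
      rw [h5, hbbv]
    have hE : (PA2.symm (PA1 ee)).val = (PA2.symm (PA1 bb)).val + (M - rb t) := by
      have h5 := himg ee hbe' le_rfl
      rw [h5, hbbv, heev]
    rcases hs' with h0 | hne
    · omega
    · have hb1 : (PA2.symm (PA1 bb)).val ≤ u'.val - 1 := by omega
      have hb2 : u'.val - 1 ≤ (PA2.symm (PA1 ee)).val := by omega
      have hb3 : (PA2.symm (PA1 bb)).val ≤ u'.val := by omega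
      have hb4 : u'.val ≤ (PA2.symm (PA1 ee)).val := by omega
      have hc1 := interval_const S hj PA1 PA2 hPA1 hPA2 bb ee hbe' hconst'
        ⟨u'.val - 1, by omega⟩ hb1 hb2
      have hc2 := interval_const S hj PA1 PA2 hPA1 hPA2 bb ee hbe' hconst' u' hb3 hb4
      exact hne (hc1.trans hc2.symm)
  rw [runCount_eq_card m (fun i : Fin (m+1) => S (PA2 i)),
      runCount_eq_card m (fun i : Fin (m+1) => S (PA1 i))]
  apply Finset.card_le_card_of_injOn (fun u => ⟨rb (PA1.symm (PA2 u)), rb_lt _⟩)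
  · intro u _
    exact Finset.mem_filter.mpr ⟨Finset.mem_univ _, rb_start _⟩
  · intro u hu u' hu' heq
    have hrb : rb (PA1.symm (PA2 u)) = rb (PA1.symm (PA2 u')) := by
      have := congrArg Fin.val heq
      simpa using this
    rcases lt_trichotomy u.val u'.val with hlt | heqv | hgt
    · exact (key u u' ((Finset.mem_filter.mp hu').2) hrb hlt).elim
    · exact Fin.ext heqv
    · exact (key u' u ((Finset.mem_filter.mp hu).2) hrb.symm hgt).elim


end PBWT
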